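/- arXiv:1411.5059 — 2 statements merged into one kernel-verified Lean document; each statement's English description precedes it below -/
import Mathlib

section
/- Non-existence of semi co-compact Gabor frames at critical density (discrete case): Let g ∈ L²(G) and let Λ be a closed discrete subgroup of G which is not co-compact (i.e. G/Λ is not compact). Let μ_Λ be a Haar measure on Λ and let μ_{Λ^⊥} be a Haar measure on the annihilator Λ^⊥ ⊂ Ĝ (which is a closed co-compact subgroup of Ĝ since Λ is discrete). Then the Gabor system {E_βT_λg}_{β∈Λ^⊥, λ∈Λ} is not a frame for L²(G): there exist no constants 0 < A ≤ B < ∞ such that (λ,β) ↦ ⟨f, E_βT_λg⟩ is measurable and A‖f‖² ≤ ∫_Λ ∫_{Λ^⊥} |⟨f, E_βT_λg⟩|² dμ_{Λ^⊥}(β) dμ_Λ(λ) ≤ B‖f‖² for all f ∈ L²(G). -/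
open MeasureTheory Complex
open scoped ENNReal NNReal

noncomputable section

/-- The Gabor atom `E_γ T_λ g : x ↦ γ(x)·g(x·λ⁻¹)` (multiplicative notation for the
group operation of `G`; `x·λ⁻¹` corresponds to `x - λ` in additive notation). -/
def gaborAtom {G : Type*} [CommGroup G] [TopologicalSpace G]
    (g : G → ℂ) (γ : PontryaginDual G) (l : G) : G → ℂ :=
  fun x => (γ x : ℂ) * g (x * l⁻¹)

/-- The `L²` pairing `⟨f, h⟩ = ∫ f·conj h`. -/
def ip {G : Type*} [MeasurableSpace G] (μ : MeasureTheory.Measure G) (f h : G → ℂ) : ℂ :=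
  ∫ x, f x * (starRingEnd ℂ) (h x) ∂μ

/-- Annihilator in `G` of a subgroup `Γ` of the Pontryagin dual. -/
def annG {G : Type*} [CommGroup G] [TopologicalSpace G]
    (Γ : Subgroup (PontryaginDual G)) : Subgroup G where
  carrier := {x : G | ∀ γ ∈ Γ, γ x = 1}
  one_mem' := by intro γ hγ; simp
  mul_mem' := by intro a b ha hb γ hγ; rw [map_mul, ha γ hγ, hb γ hγ, one_mul]
  inv_mem' := by intro a ha γ hγ; rw [map_inv, ha γ hγ, inv_one]

/-- Annihilator in the Pontryagin dual of a subgroup `Λ` of `G`. -/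
def annDual {G : Type*} [CommGroup G] [TopologicalSpace G]
    (Λ : Subgroup G) : Subgroup (PontryaginDual G) where
  carrier := {γ : PontryaginDual G | ∀ x ∈ Λ, γ x = 1}
  one_mem' := by intro x hx; rfl
  mul_mem' := by
    intro a b ha hb x hx
    have h : (a * b) x = a x * b x := rfl
    rw [h, ha x hx, hb x hx, one_mul]
  inv_mem' := by
    intro a ha x hx
    have h : (a⁻¹ : PontryaginDual _) x = (a x)⁻¹ := rfl
    rw [h, ha x hx, inv_one]

/-- Weil's formula relating the Haar measures on `A`, a closed subgroup `H` and
the quotient `A ⧸ H`: `∫_A f = ∫_{A⧸H} ∫_H f(x·h) dμ_H(h) dμ_{A⧸H}(xH)`. -/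
def WeilFormula {A : Type*} [CommGroup A] [TopologicalSpace A] [MeasurableSpace A]
    (μ : MeasureTheory.Measure A) (H : Subgroup A) (μH : MeasureTheory.Measure H)
    (μQ : MeasureTheory.Measure (A ⧸ H)) : Prop :=
  ∀ f : A → ℂ, Continuous f → HasCompactSupport f →
    ∫ x, f x ∂μ = ∫ q : A ⧸ H, ∫ h : H, f (Quotient.out q * (h : A)) ∂μH ∂μQ

/-- The Fourier transform `f̂(γ) = ∫ f(x)·conj(γ(x)) dμ(x)`. -/
def fourierCoef {G : Type*} [CommGroup G] [TopologicalSpace G] [MeasurableSpace G]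
    (μ : MeasureTheory.Measure G) (f : G → ℂ) (γ : PontryaginDual G) : ℂ :=
  ∫ x, f x * (starRingEnd ℂ) ((γ x : ℂ)) ∂μ

/-- `μD` is a measure on the dual group which is dual to `μ`, in the sense that the
Plancherel identity holds for all continuous compactly supported functions. -/
def PlancherelDual {G : Type*} [CommGroup G] [TopologicalSpace G] [MeasurableSpace G]
    [MeasurableSpace (PontryaginDual G)]
    (μ : MeasureTheory.Measure G) (μD : MeasureTheory.Measure (PontryaginDual G)) : Prop :=
  ∀ f : G → ℂ, Continuous f → HasCompactSupport f →
    ∫ γ, ‖fourierCoef μ f γ‖ ^ 2 ∂μD = ∫ x, ‖f x‖ ^ 2 ∂μ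

/-- The Gabor system `{E_{ιΓ γ} T_{ιΛ λ} g}` is a Bessel system with bound `B`:
the coefficient map is measurable and the upper frame inequality holds for every
`f ∈ L²(G)`. -/
def GaborBessel {G : Type*} [CommGroup G] [TopologicalSpace G] [MeasurableSpace G]
    {ΛT ΓT : Type*} [MeasurableSpace ΛT] [MeasurableSpace ΓT]
    (μG : MeasureTheory.Measure G) (μΛ : MeasureTheory.Measure ΛT)
    (μΓ : MeasureTheory.Measure ΓT)
    (ιΛ : ΛT → G) (ιΓ : ΓT → PontryaginDual G) (g : G → ℂ) (B : ℝ) : Prop :=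
  ∀ f : G → ℂ, MemLp f 2 μG →
    Measurable (fun p : ΛT × ΓT => ip μG f (gaborAtom g (ιΓ p.2) (ιΛ p.1))) ∧
    ∫⁻ l, ∫⁻ γ, (‖ip μG f (gaborAtom g (ιΓ γ) (ιΛ l))‖₊ : ℝ≥0∞) ^ 2 ∂μΓ ∂μΛ
      ≤ ENNReal.ofReal (B * ∫ x, ‖f x‖ ^ 2 ∂μG)

/-- The Gabor system `{E_{ιΓ γ} T_{ιΛ λ} g}` is a frame for `L²(G)` with bounds `A` and `B`. -/
def GaborFrame {G : Type*} [CommGroup G] [TopologicalSpace G] [MeasurableSpace G]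
    {ΛT ΓT : Type*} [MeasurableSpace ΛT] [MeasurableSpace ΓT]
    (μG : MeasureTheory.Measure G) (μΛ : MeasureTheory.Measure ΛT)
    (μΓ : MeasureTheory.Measure ΓT)
    (ιΛ : ΛT → G) (ιΓ : ΓT → PontryaginDual G) (g : G → ℂ) (A B : ℝ) : Prop :=
  ∀ f : G → ℂ, MemLp f 2 μG →
    Measurable (fun p : ΛT × ΓT => ip μG f (gaborAtom g (ιΓ p.2) (ιΛ p.1))) ∧
    ENNReal.ofReal (A * ∫ x, ‖f x‖ ^ 2 ∂μG)
      ≤ ∫⁻ l, ∫⁻ γ, (‖ip μG f (gaborAtom g (ιΓ γ) (ιΛ l))‖₊ : ℝ≥0∞) ^ 2 ∂μΓ ∂μΛ ∧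
    ∫⁻ l, ∫⁻ γ, (‖ip μG f (gaborAtom g (ιΓ γ) (ιΛ l))‖₊ : ℝ≥0∞) ^ 2 ∂μΓ ∂μΛ
      ≤ ENNReal.ofReal (B * ∫ x, ‖f x‖ ^ 2 ∂μG)

/-- The two Gabor systems generated by `g` and `h` are dual frames:
`⟨f₁, f₂⟩ = ∫_Λ ∫_Γ ⟨f₁, E_γT_λh⟩·⟨E_γT_λg, f₂⟩` for all `f₁, f₂ ∈ L²(G)`. -/
def GaborDualFrames {G : Type*} [CommGroup G] [TopologicalSpace G] [MeasurableSpace G]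
    {ΛT ΓT : Type*} [MeasurableSpace ΛT] [MeasurableSpace ΓT]
    (μG : MeasureTheory.Measure G) (μΛ : MeasureTheory.Measure ΛT)
    (μΓ : MeasureTheory.Measure ΓT)
    (ιΛ : ΛT → G) (ιΓ : ΓT → PontryaginDual G) (g h : G → ℂ) : Prop :=
  ∀ f₁ f₂ : G → ℂ, MemLp f₁ 2 μG → MemLp f₂ 2 μG →
    ip μG f₁ f₂ =
      ∫ l, ∫ γ, ip μG f₁ (gaborAtom h (ιΓ γ) (ιΛ l)) * ip μG (gaborAtom g (ιΓ γ) (ιΛ l)) f₂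
        ∂μΓ ∂μΛ

end

noncomputable section

set_option linter.unusedSectionVars false
set_option maxHeartbeats 1000000

lemma ofReal_norm_eq_coe_nnnorm {E : Type*} [SeminormedAddGroup E] (a : E) :
    ENNReal.ofReal ‖a‖ = (‖a‖₊ : ℝ≥0∞) :=
  ofReal_norm a

open Pointwise

section GaborHelpers

variable {G : Type*} [CommGroup G] [TopologicalSpace G] [IsTopologicalGroup G]
    [LocallyCompactSpace G] [SecondCountableTopology G] [T2Space G]
    [MeasurableSpace G] [BorelSpace G]
    (μG : Measure G) [μG.IsHaarMeasure]

lemma me_mul_right (w : G) : MeasurableEmbedding (fun x : G => x * w) :=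
  (Homeomorph.mulRight w).toMeasurableEquiv.measurableEmbedding

lemma lint_translate (w : G) (H : G → ℝ≥0∞) :
    ∫⁻ x, H (x * w) ∂μG = ∫⁻ x, H x ∂μG :=
  (measurePreserving_mul_right μG w).lintegral_comp_emb (me_mul_right w) H

lemma int_translate (w : G) (H : G → ℂ) :
    ∫ x, H (x * w) ∂μG = ∫ x, H x ∂μG :=
  (measurePreserving_mul_right μG w).integral_comp (me_mul_right w) H

lemma lint_translate_left (w : G) (H : G → ℝ≥0∞) :
    ∫⁻ x, H (w * x) ∂μG = ∫⁻ x, H x ∂μG :=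
  (measurePreserving_mul_left μG w).lintegral_comp_emb
    ((Homeomorph.mulLeft w).toMeasurableEquiv.measurableEmbedding) H

lemma memLp_translate {f : G → ℂ} (hf : MemLp f 2 μG) (w : G) :
    MemLp (fun x => f (x * w)) 2 μG := by
  have h1 : MemLp f 2 (Measure.map (fun x => x * w) μG) := by
    rwa [(measurePreserving_mul_right μG w).map_eq]
  exact (memLp_map_measure_iff
    (by rw [(measurePreserving_mul_right μG w).map_eq]; exact hf.1)
    (measurePreserving_mul_right μG w).measurable.aemeasurable).mp h1

lemma ae_translate {f f' : G → ℂ} (h : f =ᵐ[μG] f') (w : G) :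
    (fun x => f (x * w)) =ᵐ[μG] (fun x => f' (x * w)) :=
  (measurePreserving_mul_right μG w).quasiMeasurePreserving.ae_eq_comp h

lemma ofReal_int_normsq {α : Type*} [MeasurableSpace α] (μ : Measure α) (f : α → ℂ)
    (hf : MemLp f 2 μ) :
    ENNReal.ofReal (∫ x, ‖f x‖ ^ 2 ∂μ) = ∫⁻ x, (‖f x‖₊ : ℝ≥0∞) ^ 2 ∂μ := by
  have hint : Integrable (fun x => ‖f x‖ ^ 2) μ := by
    have h2 := hf.integrable_norm_rpow (by norm_num) (by norm_num)
    simp only [ENNReal.toReal_ofNat] at h2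
    have h3 : (fun x => ‖f x‖ ^ (2 : ℝ)) = fun x => ‖f x‖ ^ (2 : ℕ) := by
      funext x
      rw [← Real.rpow_natCast ‖f x‖ 2]
      norm_num
    rwa [h3] at h2
  rw [ofReal_integral_eq_lintegral_ofReal hint
    (Filter.Eventually.of_forall fun x => by positivity)]
  apply lintegral_congr
  intro x
  rw [← ofReal_norm_eq_coe_nnnorm, ← ENNReal.ofReal_pow (norm_nonneg _)]

lemma circ_nnnorm (z : Circle) : ‖(z : ℂ)‖₊ = 1 := by
  ext
  simp [Circle.norm_coe]

lemma nn_ip_translate (g F : G → ℂ) (w : G) (β : PontryaginDual G) :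
    ‖ip μG (fun x => F (x * w)) (gaborAtom g β 1)‖₊ = ‖ip μG F (gaborAtom g β w)‖₊ := by
  unfold ip gaborAtom
  have key : ∫ x, F (x * w) * (starRingEnd ℂ) ((β x : ℂ) * g (x * 1⁻¹)) ∂μG
      = (starRingEnd ℂ) ((β w⁻¹ : ℂ)) *
        ∫ x, F x * (starRingEnd ℂ) ((β x : ℂ) * g (x * w⁻¹)) ∂μG := by
    set K : G → ℂ := fun y => F y * (starRingEnd ℂ) ((β (y * w⁻¹) : ℂ) * g (y * w⁻¹)) with hK
    have h1 : ∀ x, F (x * w) * (starRingEnd ℂ) ((β x : ℂ) * g (x * 1⁻¹)) = K (x * w) := by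
      intro x
      simp only [hK, mul_inv_cancel_right, inv_one, mul_one]
    rw [integral_congr_ae (Filter.Eventually.of_forall h1), int_translate μG w K]
    have h2 : ∀ y, K y = (starRingEnd ℂ) ((β w⁻¹ : ℂ)) *
        (F y * (starRingEnd ℂ) ((β y : ℂ) * g (y * w⁻¹))) := by
      intro y
      simp only [hK]
      have h4 : (β (y * w⁻¹) : ℂ) = (β y : ℂ) * (β w⁻¹ : ℂ) := by
        rw [map_mul]; push_cast; ring
      rw [h4, map_mul, map_mul, map_mul]
      ring
    rw [integral_congr_ae (Filter.Eventually.of_forall h2), integral_const_mul]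
  rw [key, nnnorm_mul]
  have h5 : ‖(starRingEnd ℂ) ((β w⁻¹ : ℂ))‖₊ = 1 := by
    rw [RCLike.nnnorm_conj]
    exact circ_nnnorm _
  rw [h5, one_mul]

lemma gabor_avoid (Λ : Subgroup G) (hΛnc : ¬ CompactSpace (G ⧸ Λ)) (Kc : Set G)
    (hKc : IsCompact Kc) (F : Set G) (hF : F.Finite) :
    ∃ z : G, ∀ a ∈ F, a⁻¹ * z ∉ (↑Λ : Set G) * Kc := by
  by_contra hcon
  push_neg at hcon
  apply hΛnc
  have hC : IsCompact (F * Kc) := hF.isCompact.mul hKc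
  have huniv : (Set.univ : Set (G ⧸ Λ)) = QuotientGroup.mk '' (F * Kc) := by
    apply Set.eq_of_subset_of_subset _ (Set.subset_univ _)
    rintro q -
    induction q using QuotientGroup.induction_on with
    | H z =>
      obtain ⟨a, haF, hin⟩ := hcon z
      rw [Set.mem_mul] at hin
      obtain ⟨lG, hl, k, hk, heq⟩ := hin
      refine ⟨a * k, Set.mul_mem_mul haF hk, ?_⟩
      rw [QuotientGroup.eq]
      have h2 : (a * k)⁻¹ * z = lG := by
        have h3 : a⁻¹ * z = lG * k := heq.symm
        calc (a * k)⁻¹ * z = k⁻¹ * (a⁻¹ * z) := by group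
          _ = k⁻¹ * (lG * k) := by rw [h3]
          _ = lG := by rw [mul_comm lG k, ← mul_assoc, inv_mul_cancel, one_mul]
      rw [h2]
      exact hl
  exact ⟨huniv ▸ hC.image continuous_quotient_mk'⟩

lemma gabor_spread (Λ : Subgroup G) (hΛnc : ¬ CompactSpace (G ⧸ Λ)) (Kc : Set G)
    (hKc : IsCompact Kc) (hsym : ∀ u : G, u ∈ (↑Λ : Set G) * Kc → u⁻¹ ∈ (↑Λ : Set G) * Kc)
    (N : ℕ) :
    ∃ y : Fin N → G, ∀ i j, i ≠ j → (y i)⁻¹ * y j ∉ (↑Λ : Set G) * Kc := by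
  induction N with
  | zero => exact ⟨Fin.elim0, fun i => i.elim0⟩
  | succ n ih =>
    obtain ⟨y, hy⟩ := ih
    obtain ⟨z, hz⟩ := gabor_avoid Λ hΛnc Kc hKc (Set.range y) (Set.finite_range y)
    refine ⟨Fin.snoc y z, ?_⟩
    have key : ∀ i' : Fin n, ((Fin.snoc y z : Fin (n+1) → G) (Fin.castSucc i'))⁻¹ *
        ((Fin.snoc y z : Fin (n+1) → G) (Fin.last n)) ∉ (↑Λ : Set G) * Kc := by
      intro i'
      rw [Fin.snoc_castSucc, Fin.snoc_last]
      exact hz (y i') ⟨i', rfl⟩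
    intro i j hij
    rcases Fin.eq_castSucc_or_eq_last i with ⟨i', rfl⟩ | rfl <;>
      rcases Fin.eq_castSucc_or_eq_last j with ⟨j', rfl⟩ | rfl
    · rw [Fin.snoc_castSucc, Fin.snoc_castSucc]
      exact hy i' j' (fun h => hij (by rw [h]))
    · exact key i'
    · intro hmem
      have h5 := hsym _ hmem
      rw [show (((Fin.snoc y z : Fin (n+1) → G) (Fin.last n))⁻¹ *
        ((Fin.snoc y z : Fin (n+1) → G) j'.castSucc))⁻¹ =
        ((Fin.snoc y z : Fin (n+1) → G) j'.castSucc)⁻¹ *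
        ((Fin.snoc y z : Fin (n+1) → G) (Fin.last n)) from by group] at h5
      exact key j' h5
    · exact absurd rfl hij

variable [MeasurableSpace (PontryaginDual G)]

lemma gabor_bessel_at (Λ : Subgroup G) (μΛ : Measure Λ)
    (μB : Measure (annDual Λ)) (g : G → ℂ) (B : ℝ) (hB : 0 ≤ B)
    (hupper : ∀ f : G → ℂ, MemLp f 2 μG →
      ∫⁻ l : Λ, ∫⁻ γ : annDual Λ,
        (‖ip μG f (gaborAtom g (↑γ) (↑l))‖₊ : ℝ≥0∞) ^ 2 ∂μB ∂μΛ
        ≤ ENNReal.ofReal (B * ∫ x, ‖f x‖ ^ 2 ∂μG))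
    (F : G → ℂ) (hF : MemLp F 2 μG) (w : G) :
    μΛ {1} * ∫⁻ γ : annDual Λ, (‖ip μG F (gaborAtom g (↑γ) w)‖₊ : ℝ≥0∞) ^ 2 ∂μB
      ≤ ENNReal.ofReal B * ∫⁻ x, (‖F x‖₊ : ℝ≥0∞) ^ 2 ∂μG := by
  have hF' : MemLp (fun x => F (x * w)) 2 μG := memLp_translate μG hF w
  have h1 := hupper _ hF'
  have h2 : ∀ γ : annDual Λ,
      (‖ip μG (fun x => F (x * w)) (gaborAtom g (↑γ) ((1 : Λ) : G))‖₊ : ℝ≥0∞) ^ 2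
      = (‖ip μG F (gaborAtom g (↑γ) w)‖₊ : ℝ≥0∞) ^ 2 := by
    intro γ
    have hcoe : ((1 : Λ) : G) = (1 : G) := rfl
    rw [hcoe, nn_ip_translate μG g F w (↑γ)]
  have h3 : ∫⁻ l : Λ in {1}, (∫⁻ γ : annDual Λ,
        (‖ip μG (fun x => F (x * w)) (gaborAtom g (↑γ) (↑l))‖₊ : ℝ≥0∞) ^ 2 ∂μB) ∂μΛ
      ≤ ∫⁻ l : Λ, (∫⁻ γ : annDual Λ,
        (‖ip μG (fun x => F (x * w)) (gaborAtom g (↑γ) (↑l))‖₊ : ℝ≥0∞) ^ 2 ∂μB) ∂μΛ :=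
    lintegral_mono' Measure.restrict_le_self (le_refl _)
  rw [lintegral_singleton (fun l : Λ => ∫⁻ γ : annDual Λ,
    (‖ip μG (fun x => F (x * w)) (gaborAtom g (↑γ) (↑l))‖₊ : ℝ≥0∞) ^ 2 ∂μB) 1] at h3
  calc μΛ {1} * ∫⁻ γ : annDual Λ, (‖ip μG F (gaborAtom g (↑γ) w)‖₊ : ℝ≥0∞) ^ 2 ∂μB
      = (∫⁻ γ : annDual Λ, (‖ip μG (fun x => F (x * w))
          (gaborAtom g (↑γ) ((1:Λ) : G))‖₊ : ℝ≥0∞) ^ 2 ∂μB) * μΛ {1} := by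
        rw [mul_comm]; congr 1; exact lintegral_congr fun γ => (h2 γ).symm
    _ ≤ _ := h3
    _ ≤ ENNReal.ofReal (B * ∫ x, ‖F (x * w)‖ ^ 2 ∂μG) := h1
    _ = ENNReal.ofReal B * ∫⁻ x, (‖F (x * w)‖₊ : ℝ≥0∞) ^ 2 ∂μG := by
        rw [ENNReal.ofReal_mul hB, ofReal_int_normsq μG _ hF']
    _ = ENNReal.ofReal B * ∫⁻ x, (‖F x‖₊ : ℝ≥0∞) ^ 2 ∂μG := by
        rw [lint_translate μG w (fun y => (‖F y‖₊ : ℝ≥0∞) ^ 2)]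

lemma gabor_mass_bound (Λ : Subgroup G) [DiscreteTopology Λ]
    (μΛ : Measure Λ) [μΛ.IsHaarMeasure]
    (g' : G → ℂ) (hg'm : Measurable g')
    (E : Set G) (hE : MeasurableSet E)
    (hinj : ∀ (x'' : G) (l l' : Λ), x'' * ↑l ∈ E → x'' * ↑l' ∈ E → l = l') :
    ∫⁻ x in E, (∫⁻ l : Λ, (‖g' (x * (↑l)⁻¹)‖₊ : ℝ≥0∞) ^ 2 ∂μΛ) ∂μG
      ≤ μΛ {1} * ∫⁻ x, (‖g' x‖₊ : ℝ≥0∞) ^ 2 ∂μG := by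
  haveI : BorelSpace Λ := Subtype.borelSpace _
  have hsing : ∀ l : Λ, μΛ {l} = μΛ {1} := by
    intro l
    have h1 := measure_preimage_mul μΛ l⁻¹ {1}
    have h2 : ((fun h => l⁻¹ * h) ⁻¹' {1} : Set Λ) = {l} := by
      ext x
      simp [Set.mem_preimage, inv_mul_eq_one, eq_comm]
    rwa [h2] at h1
  have hmul : Measurable fun p : G × Λ => p.1 * (↑p.2)⁻¹ :=
    measurable_fst.mul ((measurable_subtype_coe.comp measurable_snd).inv)
  have hgsq : Measurable fun x : G => (‖g' x‖₊ : ℝ≥0∞) ^ 2 :=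
    (hg'm.nnnorm.coe_nnreal_ennreal).pow_const 2
  have hmeas2 : Measurable fun p : G × Λ => (‖g' (p.1 * (↑p.2)⁻¹)‖₊ : ℝ≥0∞) ^ 2 :=
    ((hg'm.comp hmul).nnnorm.coe_nnreal_ennreal).pow_const 2
  have step1 : ∫⁻ x in E, (∫⁻ l : Λ, (‖g' (x * (↑l)⁻¹)‖₊ : ℝ≥0∞) ^ 2 ∂μΛ) ∂μG
      = ∫⁻ l : Λ, (∫⁻ x in E, (‖g' (x * (↑l)⁻¹)‖₊ : ℝ≥0∞) ^ 2 ∂μG) ∂μΛ :=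
    lintegral_lintegral_swap hmeas2.aemeasurable
  have step2 : ∀ l : Λ, ∫⁻ x in E, (‖g' (x * (↑l)⁻¹)‖₊ : ℝ≥0∞) ^ 2 ∂μG
      = ∫⁻ x, E.indicator 1 (x * ↑l) * (‖g' x‖₊ : ℝ≥0∞) ^ 2 ∂μG := by
    intro l
    have e1 : ∫⁻ x in E, (‖g' (x * (↑l)⁻¹)‖₊ : ℝ≥0∞) ^ 2 ∂μG
        = ∫⁻ x, E.indicator 1 x * (‖g' (x * (↑l)⁻¹)‖₊ : ℝ≥0∞) ^ 2 ∂μG := by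
      rw [← lintegral_indicator hE]
      apply lintegral_congr; intro x
      by_cases hx : x ∈ E <;> simp [hx]
    rw [e1, ← lint_translate μG (↑l)
      (fun x => E.indicator 1 x * (‖g' (x * (↑l)⁻¹)‖₊ : ℝ≥0∞) ^ 2)]
    apply lintegral_congr; intro x
    simp only [mul_inv_cancel_right]
  have hindmeas : Measurable fun p : Λ × G => E.indicator (1 : G → ℝ≥0∞) (p.2 * ↑p.1) :=
    (measurable_one.indicator hE).comp (measurable_snd.mul (measurable_subtype_coe.comp measurable_fst))
  have step3 : ∫⁻ l : Λ, ∫⁻ x, E.indicator 1 (x * ↑l) * (‖g' x‖₊ : ℝ≥0∞) ^ 2 ∂μG ∂μΛ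
      = ∫⁻ x, ∫⁻ l : Λ, E.indicator 1 (x * ↑l) * (‖g' x‖₊ : ℝ≥0∞) ^ 2 ∂μΛ ∂μG := by
    refine lintegral_lintegral_swap ?_
    exact (hindmeas.mul (hgsq.comp measurable_snd)).aemeasurable
  have step4 : ∀ x : G, ∫⁻ l : Λ, E.indicator 1 (x * ↑l) * (‖g' x‖₊ : ℝ≥0∞) ^ 2 ∂μΛ
      ≤ μΛ {1} * (‖g' x‖₊ : ℝ≥0∞) ^ 2 := by
    intro x
    have hSmeas : MeasurableSet {l : Λ | x * ↑l ∈ E} :=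
      (measurable_const.mul measurable_subtype_coe) hE
    have e2 : (fun l : Λ => E.indicator (1 : G → ℝ≥0∞) (x * ↑l))
        = Set.indicator {l : Λ | x * ↑l ∈ E} (1 : Λ → ℝ≥0∞) := by
      funext l
      by_cases hl : x * ↑l ∈ E <;> simp [Set.indicator_apply, hl]
    have e3 : ∫⁻ l : Λ, E.indicator 1 (x * ↑l) * (‖g' x‖₊ : ℝ≥0∞) ^ 2 ∂μΛ
        = (∫⁻ l : Λ, E.indicator 1 (x * ↑l) ∂μΛ) * (‖g' x‖₊ : ℝ≥0∞) ^ 2 := by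
      rw [lintegral_mul_const]
      rw [e2]
      exact measurable_one.indicator hSmeas
    rw [e3, e2, lintegral_indicator_one hSmeas]
    apply mul_le_mul_left
    rcases Set.eq_empty_or_nonempty {l : Λ | x * ↑l ∈ E} with hS | ⟨l₀, hl₀⟩
    · rw [hS, measure_empty]; positivity
    · calc μΛ {l : Λ | x * ↑l ∈ E} ≤ μΛ {l₀} :=
          measure_mono (fun l hl => hinj x l l₀ hl hl₀)
        _ = μΛ {1} := hsing l₀
  rw [step1]
  calc ∫⁻ l : Λ, (∫⁻ x in E, (‖g' (x * (↑l)⁻¹)‖₊ : ℝ≥0∞) ^ 2 ∂μG) ∂μΛ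
      = ∫⁻ l : Λ, ∫⁻ x, E.indicator 1 (x * ↑l) * (‖g' x‖₊ : ℝ≥0∞) ^ 2 ∂μG ∂μΛ :=
        lintegral_congr step2
    _ = ∫⁻ x, ∫⁻ l : Λ, E.indicator 1 (x * ↑l) * (‖g' x‖₊ : ℝ≥0∞) ^ 2 ∂μΛ ∂μG := step3
    _ ≤ ∫⁻ x, μΛ {1} * (‖g' x‖₊ : ℝ≥0∞) ^ 2 ∂μG := lintegral_mono step4
    _ = μΛ {1} * ∫⁻ x, (‖g' x‖₊ : ℝ≥0∞) ^ 2 ∂μG := lintegral_const_mul _ hgsq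

end GaborHelpers

/-- **Non-existence of semi co-compact Gabor frames at critical density (discrete case).**
If `Λ ⊂ G` is a closed discrete subgroup which is not co-compact, then for any
`g ∈ L²(G)` the Gabor system `{E_β T_λ g}_{β ∈ Λ^⊥, λ ∈ Λ}` is not a frame for
`L²(G)`. -/
theorem no_critical_density_gabor_frame_discrete
    {G : Type*} [CommGroup G] [TopologicalSpace G] [IsTopologicalGroup G]
    [LocallyCompactSpace G] [SecondCountableTopology G] [T2Space G]
    [MeasurableSpace G] [BorelSpace G]
    (μG : Measure G) [μG.IsHaarMeasure]
    [MeasurableSpace (PontryaginDual G)] [BorelSpace (PontryaginDual G)]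
    (Λ : Subgroup G) (hΛc : IsClosed (Λ : Set G)) [DiscreteTopology Λ]
    (hΛnc : ¬ CompactSpace (G ⧸ Λ))
    (μΛ : Measure Λ) [μΛ.IsHaarMeasure]
    (μB : Measure (annDual Λ)) [μB.IsHaarMeasure]
    (g : G → ℂ) (hg : MemLp g 2 μG) :
    ¬ ∃ A B : ℝ, 0 < A ∧ A ≤ B ∧
      GaborFrame μG μΛ μB (fun l : Λ => (l : G))
        (fun β : annDual Λ => (β : PontryaginDual G)) g A B := by
  rintro ⟨A, B, hA, hAB, hframe⟩
  classical
  have hB : (0 : ℝ) < B := lt_of_lt_of_le hA hAB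
  haveI : BorelSpace Λ := Subtype.borelSpace _
  obtain ⟨g', hg'sm, hgg'⟩ : ∃ g' : G → ℂ, StronglyMeasurable g' ∧ g =ᵐ[μG] g' :=
    ⟨hg.1.mk g, hg.1.stronglyMeasurable_mk, hg.1.ae_eq_mk⟩
  have hg' : MemLp g' 2 μG := hg.ae_eq hgg'
  have hg'm : Measurable g' := hg'sm.measurable
  have hupper : ∀ f : G → ℂ, MemLp f 2 μG →
      ∫⁻ l : Λ, ∫⁻ γ : annDual Λ,
        (‖ip μG f (gaborAtom g (↑γ) (↑l))‖₊ : ℝ≥0∞) ^ 2 ∂μB ∂μΛ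
        ≤ ENNReal.ofReal (B * ∫ x, ‖f x‖ ^ 2 ∂μG) := fun f hf => (hframe f hf).2.2
  have hlower : ∀ f : G → ℂ, MemLp f 2 μG →
      ENNReal.ofReal (A * ∫ x, ‖f x‖ ^ 2 ∂μG)
        ≤ ∫⁻ l : Λ, ∫⁻ γ : annDual Λ,
          (‖ip μG f (gaborAtom g (↑γ) (↑l))‖₊ : ℝ≥0∞) ^ 2 ∂μB ∂μΛ := fun f hf =>
    (hframe f hf).2.1
  set c : ℝ≥0∞ := μΛ {1} with hc
  have hc0 : c ≠ 0 := ((isOpen_discrete {(1 : Λ)}).measure_pos μΛ ⟨1, rfl⟩).ne'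
  have hcT : c ≠ ⊤ := (IsCompact.measure_lt_top isCompact_singleton).ne
  by_cases hδex : ∃ δ : ℝ, 0 < δ ∧ 0 < μG {x | δ ≤ ‖g' x‖}
  case neg =>
    -- the window is a.e. zero; the lower frame bound fails on any indicator.
    push_neg at hδex
    have hg'0 : g' =ᵐ[μG] 0 := by
      rw [Filter.EventuallyEq, ae_iff]
      have hnull : ∀ n : ℕ, μG {x | (1 : ℝ) / (n + 1) ≤ ‖g' x‖} = 0 := by
        intro n
        have h := hδex ((1 : ℝ) / (n + 1)) (by positivity)
        exact le_antisymm h (by positivity)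
      have hsub : {x | ¬ g' x = (0 : G → ℂ) x} ⊆
          ⋃ n : ℕ, {x | (1 : ℝ) / (n + 1) ≤ ‖g' x‖} := by
        intro x hx
        have hpos : 0 < ‖g' x‖ := norm_pos_iff.mpr hx
        obtain ⟨n, hn⟩ := exists_nat_one_div_lt hpos
        exact Set.mem_iUnion.mpr ⟨n, le_of_lt hn⟩
      refine le_antisymm ?_ (by positivity)
      calc μG _ ≤ μG (⋃ n : ℕ, {x | (1 : ℝ) / (n + 1) ≤ ‖g' x‖}) := measure_mono hsub
        _ ≤ ∑' n : ℕ, μG {x | (1 : ℝ) / (n + 1) ≤ ‖g' x‖} := measure_iUnion_le _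
        _ = 0 := ENNReal.tsum_eq_zero.mpr hnull
    have hgz : g =ᵐ[μG] 0 := hgg'.trans hg'0
    have hipzero : ∀ (f : G → ℂ) (l : Λ) (γ : annDual Λ),
        ip μG f (gaborAtom g (↑γ) (↑l)) = 0 := by
      intro f l γ
      unfold ip gaborAtom
      have htr : (fun x => g (x * ((l : G))⁻¹)) =ᵐ[μG] (fun _ => (0 : ℂ)) := by
        have h0 : (fun x : G => (0 : ℂ)) = fun x => (fun _ : G => (0:ℂ)) (x * ((l:G))⁻¹) := rfl
        exact (ae_translate μG hgz ((l : G))⁻¹)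
      have hint0 : (fun x => f x * (starRingEnd ℂ) (((γ : PontryaginDual G) x : ℂ) *
          g (x * ((l : G))⁻¹))) =ᵐ[μG] fun _ => (0 : ℂ) := by
        filter_upwards [htr] with x hx
        simp [hx]
      rw [integral_congr_ae hint0, integral_zero]
    obtain ⟨K₁, hK₁c, hK₁n⟩ := exists_compact_mem_nhds (1 : G)
    have hVopen : IsOpen (interior K₁) := isOpen_interior
    have hV1 : (1 : G) ∈ interior K₁ := mem_interior_iff_mem_nhds.mpr hK₁n
    have hVpos : 0 < μG (interior K₁) := hVopen.measure_pos μG ⟨1, hV1⟩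
    have hVfin : μG (interior K₁) < ⊤ :=
      lt_of_le_of_lt (measure_mono interior_subset) hK₁c.measure_lt_top
    set f₀ : G → ℂ := (interior K₁).indicator (fun _ => 1) with hf₀def
    have hf₀ : MemLp f₀ 2 μG :=
      memLp_indicator_const 2 hVopen.measurableSet 1 (Or.inr hVfin.ne)
    have hlow := hlower f₀ hf₀
    have hI0 : ∫⁻ l : Λ, ∫⁻ γ : annDual Λ,
        (‖ip μG f₀ (gaborAtom g (↑γ) (↑l))‖₊ : ℝ≥0∞) ^ 2 ∂μB ∂μΛ = 0 := by
      have hin : ∀ l : Λ, ∫⁻ γ : annDual Λ,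
          (‖ip μG f₀ (gaborAtom g (↑γ) (↑l))‖₊ : ℝ≥0∞) ^ 2 ∂μB = 0 := by
        intro l
        have hz : ∀ γ : annDual Λ,
            (‖ip μG f₀ (gaborAtom g (↑γ) (↑l))‖₊ : ℝ≥0∞) ^ 2 = 0 := by
          intro γ
          rw [hipzero f₀ l γ]
          simp
        rw [lintegral_congr hz, lintegral_zero]
      rw [lintegral_congr hin, lintegral_zero]
    rw [hI0] at hlow
    have hint : ∫ x, ‖f₀ x‖ ^ 2 ∂μG = (μG (interior K₁)).toReal := by
      have he : (fun x => ‖f₀ x‖ ^ 2) = (interior K₁).indicator (fun _ => (1 : ℝ)) := by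
        funext x
        by_cases hx : x ∈ interior K₁ <;> simp [hf₀def, hx]
      rw [he, integral_indicator_const (1 : ℝ) hVopen.measurableSet, smul_eq_mul, mul_one, measureReal_def]
    rw [hint] at hlow
    have hpos : 0 < ENNReal.ofReal (A * (μG (interior K₁)).toReal) :=
      ENNReal.ofReal_pos.mpr (mul_pos hA (ENNReal.toReal_pos hVpos.ne' hVfin.ne))
    exact absurd (le_antisymm hlow (by positivity)) hpos.ne'
  case pos =>
    obtain ⟨δ, hδ0, hS₀pos⟩ := hδex
    set d : ℝ≥0∞ := ENNReal.ofReal δ with hd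
    have hd0 : d ≠ 0 := (ENNReal.ofReal_pos.mpr hδ0).ne'
    have hdT : d ≠ ⊤ := ENNReal.ofReal_ne_top
    set S₀ : Set G := {x | δ ≤ ‖g' x‖} with hS₀def
    have hS₀meas : MeasurableSet S₀ := measurableSet_le measurable_const hg'm.norm
    have hTfin : ∫⁻ x, (‖g' x‖₊ : ℝ≥0∞) ^ 2 ∂μG ≠ ⊤ := by
      rw [← ofReal_int_normsq μG g' hg']
      exact ENNReal.ofReal_ne_top
    have hS₀fin : μG S₀ < ⊤ := by
      have h1 : μG S₀ ≤ μG {x | d ^ 2 ≤ (‖g' x‖₊ : ℝ≥0∞) ^ 2} := by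
        apply measure_mono
        intro x hx
        have h2 : d ≤ (‖g' x‖₊ : ℝ≥0∞) := by
          rw [← ofReal_norm_eq_coe_nnnorm]
          exact ENNReal.ofReal_le_ofReal hx
        exact pow_le_pow_left' h2 2
      have hle : d ^ 2 * μG S₀ ≤ ∫⁻ x, (‖g' x‖₊ : ℝ≥0∞) ^ 2 ∂μG :=
        le_trans (mul_le_mul_right h1 _)
          (mul_meas_ge_le_lintegral₀ ((hg'm.nnnorm.coe_nnreal_ennreal).pow_const 2).aemeasurable _)
      by_contra hcon
      rw [not_lt, top_le_iff] at hcon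
      rw [hcon, ENNReal.mul_top (pow_ne_zero 2 hd0)] at hle
      exact hTfin (top_le_iff.mp hle)
    -- separating neighbourhoods
    have hdisc : IsOpen ({1} : Set Λ) := isOpen_discrete _
    rw [isOpen_induced_iff] at hdisc
    obtain ⟨U, hUopen, hUpre⟩ := hdisc
    have hU1 : (1 : G) ∈ U := by
      have h1 : (1 : Λ) ∈ (((↑) : Λ → G) ⁻¹' U) := by rw [hUpre]; rfl
      exact h1
    have hUcap : ∀ x : Λ, (x : G) ∈ U → x = 1 := by
      intro x hx
      have h1 : x ∈ (((↑) : Λ → G) ⁻¹' U) := hx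
      rw [hUpre] at h1
      exact h1
    obtain ⟨K₁, hK₁c, hK₁n⟩ := exists_compact_mem_nhds (1 : G)
    have hUK : U ∩ interior K₁ ∈ nhds (1 : G) :=
      Filter.inter_mem (hUopen.mem_nhds hU1)
        (isOpen_interior.mem_nhds (mem_interior_iff_mem_nhds.mpr hK₁n))
    obtain ⟨V, hVopen, hV1, hVV⟩ := exists_open_nhds_one_mul_subset hUK
    set V₀ : Set G := V ∩ V⁻¹ with hV₀def
    have hV₀open : IsOpen V₀ := hVopen.inter hVopen.inv
    have hV₀1 : (1 : G) ∈ V₀ := ⟨hV1, by simpa using hV1⟩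
    have hV₀sym : ∀ v ∈ V₀, v⁻¹ ∈ V₀ := fun v hv => ⟨hv.2, by simpa using hv.1⟩
    have hV₀subV : V₀ ⊆ V := Set.inter_subset_left
    have hV₀mulU : ∀ v ∈ V₀, ∀ v' ∈ V₀, v * v' ∈ U := fun v hv v' hv' =>
      (hVV (Set.mul_mem_mul (hV₀subV hv) (hV₀subV hv'))).1
    have hVsubK : V ⊆ K₁ := by
      intro v hv
      have h2 : v * 1 ∈ U ∩ interior K₁ := hVV (Set.mul_mem_mul hv hV1)
      rw [mul_one] at h2
      exact interior_subset h2.2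
    have hclV₀ : IsCompact (closure V₀) := hK₁c.closure_of_subset (hV₀subV.trans hVsubK)
    set Kc : Set G := (closure V₀ * closure V₀) ∪ (closure V₀ * closure V₀)⁻¹ with hKcdef
    have hKcc : IsCompact Kc := (hclV₀.mul hclV₀).union (hclV₀.mul hclV₀).inv
    have hKcsym : ∀ k ∈ Kc, k⁻¹ ∈ Kc := by
      intro k hk
      rcases hk with hk | hk
      · exact Or.inr (Set.inv_mem_inv.mpr hk)
      · exact Or.inl (Set.mem_inv.mp hk)
    have hSKsym : ∀ u : G, u ∈ (↑Λ : Set G) * Kc → u⁻¹ ∈ (↑Λ : Set G) * Kc := by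
      intro u hu
      rw [Set.mem_mul] at hu ⊢
      obtain ⟨l, hl, k, hk, heq⟩ := hu
      refine ⟨l⁻¹, ?_, k⁻¹, hKcsym k hk, by rw [← heq, mul_inv]⟩
      rw [SetLike.mem_coe] at hl ⊢
      exact inv_mem hl
    have hV₀V₀Kc : ∀ v ∈ V₀, ∀ v' ∈ V₀, v * v'⁻¹ ∈ Kc := fun v hv v' hv' =>
      Or.inl (Set.mul_mem_mul (subset_closure hv) (subset_closure (hV₀sym v' hv')))
    -- the periodization function
    have hmul : Measurable fun p : G × Λ => p.1 * ((p.2 : G))⁻¹ :=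
      measurable_fst.mul ((measurable_subtype_coe.comp measurable_snd).inv)
    have hmeas2 : Measurable fun p : G × Λ => (‖g' (p.1 * ((p.2 : G))⁻¹)‖₊ : ℝ≥0∞) ^ 2 :=
      ((hg'm.comp hmul).nnnorm.coe_nnreal_ennreal).pow_const 2
    set Φ : G → ℝ≥0∞ := fun x => ∫⁻ l : Λ, (‖g' (x * ((l : G))⁻¹)‖₊ : ℝ≥0∞) ^ 2 ∂μΛ with hΦdef
    have hΦmeas : Measurable Φ := by
      apply Measurable.lintegral_prod_right (f := fun (x : G) (l : Λ) =>
        (‖g' (x * ((l : G))⁻¹)‖₊ : ℝ≥0∞) ^ 2)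
      exact hmeas2
    -- key existence of a region of small periodized mass
    have exists_w : ∀ ε : ℝ≥0∞, 0 < ε → ∃ w : G, ∫⁻ x' in S₀, Φ (w * x') ∂μG < ε := by
      intro ε hε
      by_contra hcon
      push_neg at hcon
      have key : ∀ N : ℕ, (N : ℝ≥0∞) * (ε * μG V₀)
          ≤ μG S₀ * (c * ∫⁻ x, (‖g' x‖₊ : ℝ≥0∞) ^ 2 ∂μG) := by
        intro N
        obtain ⟨y, hy⟩ := gabor_spread Λ hΛnc Kc hKcc hSKsym N
        set W : Set G := ⋃ i : Fin N, (fun u => (y i)⁻¹ * u) ⁻¹' V₀ with hWdef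
        have hWmeas_i : ∀ i : Fin N, MeasurableSet ((fun u => (y i)⁻¹ * u) ⁻¹' V₀) :=
          fun i => hV₀open.measurableSet.preimage (measurable_const_mul _)
        have hWmeas : MeasurableSet W := MeasurableSet.iUnion hWmeas_i
        have claim : ∀ (x' x'' : G) (li lj : Λ) (i j : Fin N),
            ((y i)⁻¹ * (x'' * x'⁻¹)) * (li : G) ∈ V₀ →
            ((y j)⁻¹ * (x'' * x'⁻¹)) * (lj : G) ∈ V₀ → i = j ∧ li = lj := by
          intro x' x'' li lj i j hvi hvj
          by_cases hij : i = j
          · subst hij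
            refine ⟨rfl, ?_⟩
            have hval : (((y i)⁻¹ * (x'' * x'⁻¹)) * (li : G))⁻¹ *
                (((y i)⁻¹ * (x'' * x'⁻¹)) * (lj : G)) = ((li : G))⁻¹ * (lj : G) := by
              rw [mul_inv_rev, mul_assoc, inv_mul_cancel_left]
            have hU2 : ((li⁻¹ * lj : Λ) : G) ∈ U := by
              have h3 := hV₀mulU _ (hV₀sym _ hvi) _ hvj
              rw [hval] at h3
              push_cast
              exact h3
            have h4 := hUcap _ hU2
            rwa [inv_mul_eq_one] at h4
          · exfalso
            apply hy i j hij
            rw [Set.mem_mul]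
            refine ⟨((li⁻¹ * lj : Λ) : G), SetLike.coe_mem _,
              (((y i)⁻¹ * (x'' * x'⁻¹)) * (li : G)) *
                ((((y j)⁻¹ * (x'' * x'⁻¹)) * (lj : G)))⁻¹,
              hV₀V₀Kc _ hvi _ hvj, ?_⟩
            have hid1 : ∀ m n la lb : G, la⁻¹ * lb * ((m * la) * (n * lb)⁻¹) = m * n⁻¹ := by
              intro m n la lb
              simp [mul_inv_rev, mul_comm, mul_left_comm, mul_assoc]
            have hid2 : ∀ b1 b2 aa : G, (b1⁻¹ * aa) * (b2⁻¹ * aa)⁻¹ = b1⁻¹ * b2 := by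
              intro b1 b2 aa
              simp [mul_inv_rev, mul_comm, mul_left_comm, mul_assoc]
            push_cast
            rw [hid1 ((y i)⁻¹ * (x'' * x'⁻¹)) ((y j)⁻¹ * (x'' * x'⁻¹)) (li : G) (lj : G),
              hid2]
        have hpd : Pairwise (Function.onFun Disjoint
            fun i : Fin N => (fun u => (y i)⁻¹ * u) ⁻¹' V₀) := by
          intro i j hij
          rw [Function.onFun, Set.disjoint_left]
          intro u hui huj
          have h5 : ((y i)⁻¹ * (u * (1 : G)⁻¹)) * ((1 : Λ) : G) ∈ V₀ := by simpa using hui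
          have h6 : ((y j)⁻¹ * (u * (1 : G)⁻¹)) * ((1 : Λ) : G) ∈ V₀ := by simpa using huj
          exact hij (claim 1 u 1 1 i j h5 h6).1
        have hμW : μG W = N * μG V₀ := by
          rw [hWdef, measure_iUnion hpd hWmeas_i, tsum_fintype]
          have hpiece : ∀ i : Fin N, μG ((fun u => (y i)⁻¹ * u) ⁻¹' V₀) = μG V₀ :=
            fun i => measure_preimage_mul μG _ V₀
          simp [hpiece, Finset.sum_const, Finset.card_univ]
        have hswap : ∫⁻ w in W, (∫⁻ x' in S₀, Φ (w * x') ∂μG) ∂μG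
            = ∫⁻ x' in S₀, (∫⁻ w in W, Φ (w * x') ∂μG) ∂μG :=
          lintegral_lintegral_swap ((hΦmeas.comp measurable_mul).aemeasurable)
        have hinner : ∀ x' : G, ∫⁻ w in W, Φ (w * x') ∂μG
            ≤ c * ∫⁻ x, (‖g' x‖₊ : ℝ≥0∞) ^ 2 ∂μG := by
          intro x'
          set E : Set G := (fun u => u * x'⁻¹) ⁻¹' W with hEdef
          have hEmeas : MeasurableSet E := hWmeas.preimage (measurable_mul_const _)
          have htr : ∫⁻ w in W, Φ (w * x') ∂μG = ∫⁻ u in E, Φ u ∂μG := by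
            rw [← lintegral_indicator hWmeas, ← lintegral_indicator hEmeas,
              ← lint_translate μG x' (E.indicator Φ)]
            apply lintegral_congr
            intro v
            by_cases hv : v ∈ W
            · have hvE : v * x' ∈ E := by
                simp only [hEdef, Set.mem_preimage, mul_inv_cancel_right]
                exact hv
              rw [Set.indicator_of_mem hvE, Set.indicator_of_mem hv]
            · have hvE : v * x' ∉ E := by
                simp only [hEdef, Set.mem_preimage, mul_inv_cancel_right]
                exact hv
              rw [Set.indicator_of_notMem hvE, Set.indicator_of_notMem hv]
          rw [htr]
          refine gabor_mass_bound μG Λ μΛ g' hg'm E hEmeas ?_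
          intro x'' l l' hl hl'
          have hw1 : x'' * (l : G) * x'⁻¹ ∈ W := hl
          have hw2 : x'' * (l' : G) * x'⁻¹ ∈ W := hl'
          rw [hWdef, Set.mem_iUnion] at hw1 hw2
          obtain ⟨i, hi⟩ := hw1
          obtain ⟨j, hj⟩ := hw2
          have hshift : ∀ (yy x ll x'2 : G), yy⁻¹ * (x * ll * x'2⁻¹) = (yy⁻¹ * (x * x'2⁻¹)) * ll := by
            intro yy x ll x'2
            simp [mul_comm, mul_left_comm, mul_assoc]
          have hi' : ((y i)⁻¹ * (x'' * x'⁻¹)) * (l : G) ∈ V₀ := by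
            rw [← hshift]; exact hi
          have hj' : ((y j)⁻¹ * (x'' * x'⁻¹)) * (l' : G) ∈ V₀ := by
            rw [← hshift]; exact hj
          exact (claim x' x'' l l' i j hi' hj').2
        calc (N : ℝ≥0∞) * (ε * μG V₀) = ε * μG W := by rw [hμW]; ring
          _ = ∫⁻ _ in W, ε ∂μG := by rw [setLIntegral_const]
          _ ≤ ∫⁻ w in W, (∫⁻ x' in S₀, Φ (w * x') ∂μG) ∂μG :=
              lintegral_mono fun w => hcon w
          _ = ∫⁻ x' in S₀, (∫⁻ w in W, Φ (w * x') ∂μG) ∂μG := hswap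
          _ ≤ ∫⁻ _ in S₀, (c * ∫⁻ x, (‖g' x‖₊ : ℝ≥0∞) ^ 2 ∂μG) ∂μG :=
              lintegral_mono fun x' => hinner x'
          _ = μG S₀ * (c * ∫⁻ x, (‖g' x‖₊ : ℝ≥0∞) ^ 2 ∂μG) := by
              rw [setLIntegral_const, mul_comm]
      have hfin : μG S₀ * (c * ∫⁻ x, (‖g' x‖₊ : ℝ≥0∞) ^ 2 ∂μG) ≠ ⊤ :=
        ENNReal.mul_ne_top hS₀fin.ne (ENNReal.mul_ne_top hcT hTfin)
      have hεV₀ : ε * μG V₀ ≠ 0 :=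
        mul_ne_zero hε.ne' (hV₀open.measure_pos μG ⟨1, hV₀1⟩).ne'
      rcases eq_top_or_lt_top (ε * μG V₀) with hx | hx
      · have h7 := key 1
        rw [hx] at h7
        simp only [Nat.cast_one, one_mul] at h7
        exact hfin (top_le_iff.mp h7)
      · obtain ⟨n, hn⟩ := ENNReal.exists_nat_gt
          (ENNReal.div_lt_top hfin hεV₀).ne
        have h8 : μG S₀ * (c * ∫⁻ x, (‖g' x‖₊ : ℝ≥0∞) ^ 2 ∂μG) < n * (ε * μG V₀) :=
          (ENNReal.div_lt_iff (Or.inl hεV₀) (Or.inl hx.ne)).mp hn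
        exact absurd (key n) (not_le.mpr h8)
    -- final assembly
    have hS₀pos' : μG S₀ ≠ 0 := hS₀pos.ne'
    set X : ℝ≥0∞ := ENNReal.ofReal A * μG S₀ with hX
    have hA0 : ENNReal.ofReal A ≠ 0 := (ENNReal.ofReal_pos.mpr hA).ne'
    have hB0 : ENNReal.ofReal B ≠ 0 := (ENNReal.ofReal_pos.mpr hB).ne'
    have hBT : ENNReal.ofReal B ≠ ⊤ := ENNReal.ofReal_ne_top
    have hX0 : X ≠ 0 := mul_ne_zero hA0 hS₀pos'
    set ε : ℝ≥0∞ := X * c * d ^ 2 * (ENNReal.ofReal B)⁻¹ with hεdef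
    have hεpos : 0 < ε := by
      rw [pos_iff_ne_zero]
      exact mul_ne_zero (mul_ne_zero (mul_ne_zero hX0 hc0) (pow_ne_zero 2 hd0))
        (ENNReal.inv_ne_zero.mpr hBT)
    obtain ⟨w, hw⟩ := exists_w ε hεpos
    set S : Set G := (fun x => w⁻¹ * x) ⁻¹' S₀ with hSdef
    have hSmeas : MeasurableSet S := hS₀meas.preimage (measurable_const_mul w⁻¹)
    have hμS : μG S = μG S₀ := measure_preimage_mul μG w⁻¹ S₀
    have hSprop : ∀ x ∈ S, δ ≤ ‖g' (x * w⁻¹)‖ := by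
      intro x hx
      have h1 : δ ≤ ‖g' (w⁻¹ * x)‖ := hx
      rwa [mul_comm] at h1
    set f : G → ℂ := S.indicator (fun _ => 1) with hfdef
    have hfLp : MemLp f 2 μG :=
      memLp_indicator_const 2 hSmeas 1 (Or.inr (by rw [hμS]; exact hS₀fin.ne))
    set FF : Λ → G → ℂ := fun l => S.indicator (fun x =>
      (starRingEnd ℂ) (g' (x * ((l : G))⁻¹)) * ((starRingEnd ℂ) (g' (x * w⁻¹)))⁻¹) with hFFdef
    have hFFmeas : ∀ l : Λ, Measurable (FF l) := by
      intro l
      apply Measurable.indicator _ hSmeas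
      have hconj : Measurable fun z : ℂ => (starRingEnd ℂ) z :=
        Complex.continuous_conj.measurable
      exact (hconj.comp (hg'm.comp (measurable_mul_const _))).mul
        ((hconj.comp (hg'm.comp (measurable_mul_const _))).inv)
    have hFFnorm : ∀ (l : Λ) (x : G), ‖FF l x‖ ≤ δ⁻¹ * ‖g' (x * ((l : G))⁻¹)‖ := by
      intro l x
      by_cases hx : x ∈ S
      · rw [hFFdef]
        dsimp only
        rw [Set.indicator_of_mem hx, norm_mul, norm_inv, RCLike.norm_conj, RCLike.norm_conj,
          mul_comm]
        exact mul_le_mul_of_nonneg_right (inv_anti₀ hδ0 (hSprop x hx)) (norm_nonneg _)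
      · rw [hFFdef]
        dsimp only
        rw [Set.indicator_of_notMem hx]
        simp only [norm_zero]
        positivity
    have hFFlp : ∀ l : Λ, MemLp (FF l) 2 μG := by
      intro l
      refine MemLp.of_le ((memLp_translate μG hg' ((l : G))⁻¹).norm.const_mul δ⁻¹)
        (hFFmeas l).aestronglyMeasurable ?_
      apply Filter.Eventually.of_forall
      intro x
      refine le_trans (hFFnorm l x) ?_
      rw [Real.norm_eq_abs]
      exact le_abs_self _
    have hip_eq : ∀ (l : Λ) (γ : annDual Λ),
        ip μG f (gaborAtom g (↑γ) ((l : G))) = ip μG (FF l) (gaborAtom g (↑γ) w) := by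
      intro l γ
      unfold ip gaborAtom
      apply integral_congr_ae
      have h1 : (fun x => g (x * ((l : G))⁻¹)) =ᵐ[μG] (fun x => g' (x * ((l : G))⁻¹)) :=
        ae_translate μG hgg' _
      have h2 : (fun x => g (x * w⁻¹)) =ᵐ[μG] (fun x => g' (x * w⁻¹)) :=
        ae_translate μG hgg' _
      filter_upwards [h1, h2] with x hx1 hx2
      by_cases hxS : x ∈ S
      · have hδx : δ ≤ ‖g' (x * w⁻¹)‖ := hSprop x hxS
        have hne : g' (x * w⁻¹) ≠ 0 := by
          intro h0
          rw [h0, norm_zero] at hδx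
          exact absurd hδx (not_le.mpr hδ0)
        have hne' : (starRingEnd ℂ) (g' (x * w⁻¹)) ≠ 0 := star_ne_zero.mpr hne
        rw [hfdef, hFFdef]
        dsimp only
        rw [Set.indicator_of_mem hxS, Set.indicator_of_mem hxS, hx1, hx2, map_mul, map_mul]
        field_simp
      · rw [hfdef, hFFdef]
        dsimp only
        rw [Set.indicator_of_notMem hxS, Set.indicator_of_notMem hxS, zero_mul, zero_mul]
    have hFFbound : ∀ l : Λ, ∫⁻ x, (‖FF l x‖₊ : ℝ≥0∞) ^ 2 ∂μG
        ≤ (d ^ 2)⁻¹ * ∫⁻ x in S, (‖g' (x * ((l : G))⁻¹)‖₊ : ℝ≥0∞) ^ 2 ∂μG := by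
      intro l
      have hKinv : ((d ^ 2)⁻¹ : ℝ≥0∞) ≠ ⊤ := ENNReal.inv_ne_top.mpr (pow_ne_zero 2 hd0)
      rw [← lintegral_indicator hSmeas, ← lintegral_const_mul' _ _ hKinv]
      apply lintegral_mono
      intro x
      dsimp only
      by_cases hx : x ∈ S
      · rw [Set.indicator_of_mem hx]
        have hb : (‖FF l x‖₊ : ℝ≥0∞) ≤ d⁻¹ * (‖g' (x * ((l : G))⁻¹)‖₊ : ℝ≥0∞) := by
          calc (‖FF l x‖₊ : ℝ≥0∞) = ENNReal.ofReal ‖FF l x‖ :=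
              (ofReal_norm_eq_coe_nnnorm _).symm
            _ ≤ ENNReal.ofReal (δ⁻¹ * ‖g' (x * ((l : G))⁻¹)‖) :=
              ENNReal.ofReal_le_ofReal (hFFnorm l x)
            _ = ENNReal.ofReal δ⁻¹ * ENNReal.ofReal ‖g' (x * ((l : G))⁻¹)‖ :=
              ENNReal.ofReal_mul (by positivity)
            _ = d⁻¹ * (‖g' (x * ((l : G))⁻¹)‖₊ : ℝ≥0∞) := by
              rw [hd, ENNReal.ofReal_inv_of_pos hδ0, ofReal_norm_eq_coe_nnnorm]
        calc (‖FF l x‖₊ : ℝ≥0∞) ^ 2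
            ≤ (d⁻¹ * (‖g' (x * ((l : G))⁻¹)‖₊ : ℝ≥0∞)) ^ 2 := pow_le_pow_left' hb 2
          _ = (d ^ 2)⁻¹ * (‖g' (x * ((l : G))⁻¹)‖₊ : ℝ≥0∞) ^ 2 := by
              rw [mul_pow, ENNReal.inv_pow]
      · rw [Set.indicator_of_notMem hx, hFFdef]
        dsimp only
        rw [Set.indicator_of_notMem hx]
        simp
    have hlow := hlower f hfLp
    have hintf : ∫ x, ‖f x‖ ^ 2 ∂μG = (μG S₀).toReal := by
      have he : (fun x => ‖f x‖ ^ 2) = S.indicator (fun _ => (1 : ℝ)) := by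
        funext x
        by_cases hx : x ∈ S <;> simp [hfdef, hx]
      rw [he, integral_indicator_const (1 : ℝ) hSmeas, smul_eq_mul, mul_one, measureReal_def, hμS]
    rw [hintf] at hlow
    have hlowX : X ≤ ∫⁻ l : Λ, ∫⁻ γ : annDual Λ,
        (‖ip μG f (gaborAtom g (↑γ) (↑l))‖₊ : ℝ≥0∞) ^ 2 ∂μB ∂μΛ := by
      refine le_trans (le_of_eq ?_) hlow
      rw [hX, ENNReal.ofReal_mul hA.le, ENNReal.ofReal_toReal hS₀fin.ne]
    have hup : ∀ l : Λ, ∫⁻ γ : annDual Λ,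
        (‖ip μG f (gaborAtom g (↑γ) (↑l))‖₊ : ℝ≥0∞) ^ 2 ∂μB
        ≤ c⁻¹ * (ENNReal.ofReal B * ((d ^ 2)⁻¹ *
            ∫⁻ x in S, (‖g' (x * ((l : G))⁻¹)‖₊ : ℝ≥0∞) ^ 2 ∂μG)) := by
      intro l
      have e1 : ∫⁻ γ : annDual Λ, (‖ip μG f (gaborAtom g (↑γ) (↑l))‖₊ : ℝ≥0∞) ^ 2 ∂μB
          = ∫⁻ γ : annDual Λ, (‖ip μG (FF l) (gaborAtom g (↑γ) w)‖₊ : ℝ≥0∞) ^ 2 ∂μB :=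
        lintegral_congr fun γ => by rw [hip_eq l γ]
      have e2 := gabor_bessel_at μG Λ μΛ μB g B hB.le hupper (FF l) (hFFlp l) w
      have e3 : c * ∫⁻ γ : annDual Λ,
          (‖ip μG (FF l) (gaborAtom g (↑γ) w)‖₊ : ℝ≥0∞) ^ 2 ∂μB
          ≤ ENNReal.ofReal B * ((d ^ 2)⁻¹ *
            ∫⁻ x in S, (‖g' (x * ((l : G))⁻¹)‖₊ : ℝ≥0∞) ^ 2 ∂μG) :=
        le_trans e2 (mul_le_mul_right (hFFbound l) _)
      rw [e1]
      calc ∫⁻ γ : annDual Λ, (‖ip μG (FF l) (gaborAtom g (↑γ) w)‖₊ : ℝ≥0∞) ^ 2 ∂μB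
          = c⁻¹ * (c * ∫⁻ γ : annDual Λ,
              (‖ip μG (FF l) (gaborAtom g (↑γ) w)‖₊ : ℝ≥0∞) ^ 2 ∂μB) := by
            rw [← mul_assoc, ENNReal.inv_mul_cancel hc0 hcT, one_mul]
        _ ≤ c⁻¹ * (ENNReal.ofReal B * ((d ^ 2)⁻¹ *
              ∫⁻ x in S, (‖g' (x * ((l : G))⁻¹)‖₊ : ℝ≥0∞) ^ 2 ∂μG)) :=
            mul_le_mul_right e3 _
    have hP : ∫⁻ l : Λ, ∫⁻ x in S, (‖g' (x * ((l : G))⁻¹)‖₊ : ℝ≥0∞) ^ 2 ∂μG ∂μΛ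
        = ∫⁻ x' in S₀, Φ (w * x') ∂μG := by
      have hsw : ∫⁻ l : Λ, ∫⁻ x in S, (‖g' (x * ((l : G))⁻¹)‖₊ : ℝ≥0∞) ^ 2 ∂μG ∂μΛ
          = ∫⁻ x in S, Φ x ∂μG := by
        simp only [hΦdef]
        exact lintegral_lintegral_swap
          ((hmeas2.comp (measurable_snd.prodMk measurable_fst)).aemeasurable)
      rw [hsw, ← lintegral_indicator hSmeas, ← lintegral_indicator hS₀meas,
        ← lint_translate_left μG w (S.indicator Φ)]
      apply lintegral_congr
      intro u
      by_cases hu : u ∈ S₀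
      · have huS : w * u ∈ S := by
          rw [hSdef]
          simp only [Set.mem_preimage, inv_mul_cancel_left]
          exact hu
        rw [Set.indicator_of_mem huS, Set.indicator_of_mem hu]
      · have huS : w * u ∉ S := by
          rw [hSdef]
          simp only [Set.mem_preimage, inv_mul_cancel_left]
          exact hu
        rw [Set.indicator_of_notMem huS, Set.indicator_of_notMem hu]
    have hKconst : (c⁻¹ * (ENNReal.ofReal B * (d ^ 2)⁻¹)) ≠ ⊤ :=
      ENNReal.mul_ne_top (ENNReal.inv_ne_top.mpr hc0)
        (ENNReal.mul_ne_top hBT (ENNReal.inv_ne_top.mpr (pow_ne_zero 2 hd0)))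
    have hKne0 : (c⁻¹ * (ENNReal.ofReal B * (d ^ 2)⁻¹)) ≠ 0 :=
      mul_ne_zero (ENNReal.inv_ne_zero.mpr hcT)
        (mul_ne_zero hB0 (ENNReal.inv_ne_zero.mpr (ENNReal.pow_ne_top hdT)))
    have hchain : X ≤ (c⁻¹ * (ENNReal.ofReal B * (d ^ 2)⁻¹)) *
        ∫⁻ x' in S₀, Φ (w * x') ∂μG := by
      refine le_trans hlowX ?_
      calc ∫⁻ l : Λ, ∫⁻ γ : annDual Λ,
            (‖ip μG f (gaborAtom g (↑γ) (↑l))‖₊ : ℝ≥0∞) ^ 2 ∂μB ∂μΛ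
          ≤ ∫⁻ l : Λ, c⁻¹ * (ENNReal.ofReal B * ((d ^ 2)⁻¹ *
              ∫⁻ x in S, (‖g' (x * ((l : G))⁻¹)‖₊ : ℝ≥0∞) ^ 2 ∂μG)) ∂μΛ :=
            lintegral_mono hup
        _ = (c⁻¹ * (ENNReal.ofReal B * (d ^ 2)⁻¹)) *
            ∫⁻ l : Λ, ∫⁻ x in S, (‖g' (x * ((l : G))⁻¹)‖₊ : ℝ≥0∞) ^ 2 ∂μG ∂μΛ := by
            rw [← lintegral_const_mul' _ _ hKconst]
            apply lintegral_congr
            intro l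
            ring
        _ = (c⁻¹ * (ENNReal.ofReal B * (d ^ 2)⁻¹)) * ∫⁻ x' in S₀, Φ (w * x') ∂μG := by
            rw [hP]
    have hfinal : (c⁻¹ * (ENNReal.ofReal B * (d ^ 2)⁻¹)) * ε = X := by
      rw [hεdef]
      have hre : (c⁻¹ * (ENNReal.ofReal B * (d ^ 2)⁻¹)) *
          (X * c * d ^ 2 * (ENNReal.ofReal B)⁻¹)
          = X * ((c⁻¹ * c) * (((d ^ 2)⁻¹ * d ^ 2) *
            (ENNReal.ofReal B * (ENNReal.ofReal B)⁻¹))) := by ring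
      rw [hre, ENNReal.inv_mul_cancel hc0 hcT,
        ENNReal.inv_mul_cancel (pow_ne_zero 2 hd0) (ENNReal.pow_ne_top hdT),
        ENNReal.mul_inv_cancel hB0 hBT]
      simp
    have hlt : X < X :=
      calc X ≤ (c⁻¹ * (ENNReal.ofReal B * (d ^ 2)⁻¹)) *
            ∫⁻ x' in S₀, Φ (w * x') ∂μG := hchain
        _ < (c⁻¹ * (ENNReal.ofReal B * (d ^ 2)⁻¹)) * ε :=
            ENNReal.mul_lt_mul_right hKne0 hKconst hw
        _ = X := hfinal
    exact absurd hlt (lt_irrefl X)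

end
end

section
/- Characterization of Riesz sequences in Hilbert spaces: Let (f_k)_{k∈ℕ} be a sequence in a complex Hilbert space H and let 0 < A ≤ B < ∞. Then the following are equivalent: (a) (f_k) is a Riesz sequence with lower bound A and upper bound B, i.e. A·∑_k |c_k|² ≤ ‖∑_k c_k f_k‖² ≤ B·∑_k |c_k|² for every finitely supported sequence (c_k) of complex numbers; (b) (f_k) is a Bessel system with bound B, i.e. ∑_k |⟨f, f_k⟩|² ≤ B‖f‖² for all f ∈ H, and there exists a sequence (g_k) in H biorthogonal to (f_k), i.e. ⟨f_j, g_k⟩ = 1 if j = k and 0 otherwise, which is a Bessel system with bound A⁻¹, i.e. ∑_k |⟨f, g_k⟩|² ≤ A⁻¹‖f‖² for all f ∈ H. -/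
open scoped ENNReal

noncomputable section

section RieszHelpers

lemma finset_sum_ennreal_eq (a : ℕ → ℂ) (S : Finset ℕ) :
    ∑ k ∈ S, (‖a k‖₊ : ℝ≥0∞) ^ 2 = ENNReal.ofReal (∑ k ∈ S, ‖a k‖ ^ 2) := by
  rw [ENNReal.ofReal_sum_of_nonneg (fun i _ => by positivity)]
  refine Finset.sum_congr rfl fun i _ => ?_
  rw [ENNReal.ofReal_pow (norm_nonneg _), ofReal_norm, enorm_eq_nnnorm]

lemma tsum_bound_of_finset {a : ℕ → ℂ} {C : ℝ}
    (h : ∀ S : Finset ℕ, ∑ k ∈ S, ‖a k‖ ^ 2 ≤ C) :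
    ∑' k, (‖a k‖₊ : ℝ≥0∞) ^ 2 ≤ ENNReal.ofReal C := by
  rw [ENNReal.tsum_eq_iSup_sum]
  exact iSup_le fun S => (finset_sum_ennreal_eq a S) ▸ ENNReal.ofReal_le_ofReal (h S)

lemma finset_bound_of_tsum {a : ℕ → ℂ} {C : ℝ} (hC : 0 ≤ C)
    (h : ∑' k, (‖a k‖₊ : ℝ≥0∞) ^ 2 ≤ ENNReal.ofReal C) (S : Finset ℕ) :
    ∑ k ∈ S, ‖a k‖ ^ 2 ≤ C := by
  have h1 : ENNReal.ofReal (∑ k ∈ S, ‖a k‖ ^ 2) ≤ ENNReal.ofReal C :=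
    le_trans ((finset_sum_ennreal_eq a S) ▸ ENNReal.sum_le_tsum S) h
  exact (ENNReal.ofReal_le_ofReal_iff hC).mp h1

variable {H : Type*} [NormedAddCommGroup H] [InnerProductSpace ℂ H]

-- Bessel bound B (finset version) from upper Riesz inequality
lemma bessel_of_riesz_upper (f : ℕ → H) (B : ℝ) (hB : 0 ≤ B)
    (hR : ∀ c : ℕ →₀ ℂ, ‖∑ k ∈ c.support, c k • f k‖ ^ 2 ≤ B * ∑ k ∈ c.support, ‖c k‖ ^ 2)
    (x : H) (S : Finset ℕ) :
    ∑ k ∈ S, ‖(inner ℂ x (f k) : ℂ)‖ ^ 2 ≤ B * ‖x‖ ^ 2 := by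
  set a : ℕ → ℂ := fun k => inner ℂ x (f k) with ha
  set c : ℕ →₀ ℂ := Finsupp.onFinset S (fun k => if k ∈ S then (starRingEnd ℂ) (a k) else 0)
    (fun k h => by by_contra hk; simp [hk] at h) with hc
  have hsupp : c.support ⊆ S := Finsupp.support_onFinset_subset
  have hcS : ∀ k ∈ S, c k = (starRingEnd ℂ) (a k) := fun k hk => by simp [hc, hk]
  have hsum_f : ∑ k ∈ c.support, c k • f k = ∑ k ∈ S, (starRingEnd ℂ) (a k) • f k := by
    rw [Finset.sum_subset hsupp (fun k _ hk => by
      rw [Finsupp.notMem_support_iff.mp hk, zero_smul])]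
    exact Finset.sum_congr rfl fun k hk => by rw [hcS k hk]
  have hsum_n : ∑ k ∈ c.support, ‖c k‖ ^ 2 = ∑ k ∈ S, ‖a k‖ ^ 2 := by
    rw [Finset.sum_subset hsupp (fun k _ hk => by
      rw [Finsupp.notMem_support_iff.mp hk, norm_zero]; ring)]
    exact Finset.sum_congr rfl fun k hk => by rw [hcS k hk, RCLike.norm_conj]
  set u : H := ∑ k ∈ S, (starRingEnd ℂ) (a k) • f k with hu
  set T : ℝ := ∑ k ∈ S, ‖a k‖ ^ 2 with hT
  have hT0 : 0 ≤ T := Finset.sum_nonneg fun i _ => by positivity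
  have hinner : (inner ℂ x u : ℂ) = (T : ℂ) := by
    rw [hu, inner_sum]
    have : ∀ k ∈ S, (inner ℂ x ((starRingEnd ℂ) (a k) • f k) : ℂ) = (‖a k‖ ^ 2 : ℝ) := by
      intro k _
      rw [inner_smul_right]
      have hak : (inner ℂ x (f k) : ℂ) = a k := rfl
      rw [hak]
      rw [Complex.conj_mul']
      push_cast
      ring
    rw [Finset.sum_congr rfl this, hT]; push_cast; ring
  have hTle : T ≤ ‖x‖ * ‖u‖ := by
    calc T = ‖(inner ℂ x u : ℂ)‖ := by rw [hinner]; simp [abs_of_nonneg hT0]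
    _ ≤ ‖x‖ * ‖u‖ := norm_inner_le_norm x u
  have hu2 : ‖u‖ ^ 2 ≤ B * T := by
    have := hR c
    rwa [hsum_f, hsum_n] at this
  rcases eq_or_lt_of_le hT0 with h0 | h0
  · rw [← h0]; positivity
  · have h1 : T ^ 2 ≤ ‖x‖ ^ 2 * (B * T) := by
      calc T ^ 2 ≤ (‖x‖ * ‖u‖) ^ 2 := pow_le_pow_left₀ hT0 hTle 2
      _ = ‖x‖ ^ 2 * ‖u‖ ^ 2 := by ring
      _ ≤ ‖x‖ ^ 2 * (B * T) := mul_le_mul_of_nonneg_left hu2 (sq_nonneg ‖x‖)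
    have h2 : T * T ≤ (B * ‖x‖ ^ 2) * T := by
      calc T * T = T ^ 2 := (sq T).symm
      _ ≤ ‖x‖ ^ 2 * (B * T) := h1
      _ = (B * ‖x‖ ^ 2) * T := by ring
    exact le_of_mul_le_mul_right h2 h0

lemma riesz_lower_of_bessel (f g : ℕ → H) (A : ℝ) (hA : 0 < A)
    (hbi : ∀ j k : ℕ, (inner ℂ (f j) (g k) : ℂ) = if j = k then 1 else 0)
    (hBg : ∀ x : H, ∀ S : Finset ℕ, ∑ k ∈ S, ‖(inner ℂ x (g k) : ℂ)‖ ^ 2 ≤ A⁻¹ * ‖x‖ ^ 2)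
    (c : ℕ →₀ ℂ) :
    A * ∑ k ∈ c.support, ‖c k‖ ^ 2 ≤ ‖∑ k ∈ c.support, c k • f k‖ ^ 2 := by
  set F : H := ∑ k ∈ c.support, c k • f k with hF
  have hval : ∀ k, (inner ℂ F (g k) : ℂ) = (starRingEnd ℂ) (c k) := by
    intro k
    rw [hF, sum_inner]
    have : ∀ j ∈ c.support, (inner ℂ (c j • f j) (g k) : ℂ)
        = if j = k then (starRingEnd ℂ) (c j) else 0 := by
      intro j _
      rw [inner_smul_left, hbi j k, mul_ite, mul_one, mul_zero]
    rw [Finset.sum_congr rfl this, Finset.sum_ite_eq' c.support k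
      (fun j => (starRingEnd ℂ) (c j))]
    split_ifs with hk
    · rfl
    · rw [Finsupp.notMem_support_iff.mp hk, map_zero]
  have h1 : ∑ k ∈ c.support, ‖(inner ℂ F (g k) : ℂ)‖ ^ 2 ≤ A⁻¹ * ‖F‖ ^ 2 := hBg F c.support
  have h2 : ∑ k ∈ c.support, ‖c k‖ ^ 2 ≤ A⁻¹ * ‖F‖ ^ 2 := by
    rw [show ∑ k ∈ c.support, ‖c k‖ ^ 2 = ∑ k ∈ c.support, ‖(inner ℂ F (g k) : ℂ)‖ ^ 2 from
      Finset.sum_congr rfl fun k _ => by rw [hval k, RCLike.norm_conj]]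
    exact h1
  have h3 := mul_le_mul_of_nonneg_left h2 hA.le
  rwa [← mul_assoc, mul_inv_cancel₀ hA.ne', one_mul] at h3

lemma riesz_upper_of_bessel (f : ℕ → H) (B : ℝ) (hB : 0 < B)
    (hBf : ∀ x : H, ∀ S : Finset ℕ, ∑ k ∈ S, ‖(inner ℂ x (f k) : ℂ)‖ ^ 2 ≤ B * ‖x‖ ^ 2)
    (c : ℕ →₀ ℂ) :
    ‖∑ k ∈ c.support, c k • f k‖ ^ 2 ≤ B * ∑ k ∈ c.support, ‖c k‖ ^ 2 := by
  set F : H := ∑ k ∈ c.support, c k • f k with hF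
  set a : ℕ → ℂ := fun k => inner ℂ F (f k) with ha
  have hFF : (inner ℂ F F : ℂ) = ∑ k ∈ c.support, c k * a k := by
    rw [show (inner ℂ F F : ℂ) = inner ℂ F (∑ k ∈ c.support, c k • f k) from rfl, inner_sum]
    exact Finset.sum_congr rfl fun k _ => by rw [inner_smul_right]
  have h3 : ‖F‖ ^ 2 = ‖∑ k ∈ c.support, c k * a k‖ := by
    rw [← hFF, inner_self_eq_norm_sq_to_K]
    simp [norm_pow]
  have h4 : ‖∑ k ∈ c.support, c k * a k‖ ≤ ∑ k ∈ c.support, ‖c k‖ * ‖a k‖ := by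
    refine (norm_sum_le _ _).trans ?_
    exact le_of_eq (Finset.sum_congr rfl fun k _ => norm_mul _ _)
  have hCS : (∑ k ∈ c.support, ‖c k‖ * ‖a k‖) ^ 2
      ≤ (∑ k ∈ c.support, ‖c k‖ ^ 2) * (∑ k ∈ c.support, ‖a k‖ ^ 2) :=
    Finset.sum_mul_sq_le_sq_mul_sq c.support _ _
  have hBes : ∑ k ∈ c.support, ‖a k‖ ^ 2 ≤ B * ‖F‖ ^ 2 := hBf F c.support
  set t : ℝ := ‖F‖ ^ 2 with ht
  set s1 : ℝ := ∑ k ∈ c.support, ‖c k‖ ^ 2 with hs1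
  have hs1nn : 0 ≤ s1 := Finset.sum_nonneg fun k _ => by positivity
  have ht0 : 0 ≤ t := by rw [ht]; positivity
  rcases eq_or_lt_of_le ht0 with h0 | h0
  · rw [← h0]; exact mul_nonneg hB.le hs1nn
  · have hsum_nn : 0 ≤ ∑ k ∈ c.support, ‖c k‖ * ‖a k‖ :=
      Finset.sum_nonneg fun k _ => by positivity
    have h5a : t ^ 2 ≤ (∑ k ∈ c.support, ‖c k‖ * ‖a k‖) ^ 2 := by
      rw [h3]; exact pow_le_pow_left₀ (norm_nonneg _) h4 2
    have h5 : t ^ 2 ≤ s1 * (B * t) := by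
      calc t ^ 2 ≤ (∑ k ∈ c.support, ‖c k‖ * ‖a k‖) ^ 2 := h5a
      _ ≤ s1 * (∑ k ∈ c.support, ‖a k‖ ^ 2) := hCS
      _ ≤ s1 * (B * t) := mul_le_mul_of_nonneg_left hBes hs1nn
    have h6 : t * t ≤ (B * s1) * t := by
      calc t * t = t ^ 2 := (sq t).symm
      _ ≤ s1 * (B * t) := h5
      _ = (B * s1) * t := by ring
    exact le_of_mul_le_mul_right h6 h0

variable [CompleteSpace H]

lemma exists_biorthogonal (f : ℕ → H) (A : ℝ) (hA : 0 < A)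
    (hR : ∀ c : ℕ →₀ ℂ,
      A * ∑ k ∈ c.support, ‖c k‖ ^ 2 ≤ ‖∑ k ∈ c.support, c k • f k‖ ^ 2) :
    ∃ g : ℕ → H,
      (∀ j k : ℕ, (inner ℂ (f j) (g k) : ℂ) = if j = k then 1 else 0) ∧
      ∀ (x : H) (S : Finset ℕ), ∑ k ∈ S, ‖(inner ℂ x (g k) : ℂ)‖ ^ 2 ≤ A⁻¹ * ‖x‖ ^ 2 := by
  classical
  -- the Riesz hypothesis in linearCombination form
  have hR' : ∀ c : ℕ →₀ ℂ,
      A * ∑ k ∈ c.support, ‖c k‖ ^ 2 ≤ ‖Finsupp.linearCombination ℂ f c‖ ^ 2 := by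
    intro c
    rw [Finsupp.linearCombination_apply, Finsupp.sum]
    exact hR c
  set M : Submodule ℂ H := (Submodule.span ℂ (Set.range f)).topologicalClosure with hM
  haveI : CompleteSpace M := (Submodule.isClosed_topologicalClosure _).completeSpace_coe
  set Mk : ℕ → Submodule ℂ H :=
    fun k => (Submodule.span ℂ (f '' {j | j ≠ k})).topologicalClosure with hMk
  haveI : ∀ k, CompleteSpace (Mk k) :=
    fun k => (Submodule.isClosed_topologicalClosure _).completeSpace_coe
  set h : ℕ → H := fun k => f k - (Submodule.orthogonalProjectionOnto (Mk k) (f k) : H) with hh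
  -- distance from f k to Mk k is at least √A
  have hdist : ∀ k, ∀ y ∈ Mk k, A ≤ ‖f k - y‖ ^ 2 := by
    intro k
    have hspan : ∀ y ∈ Submodule.span ℂ (f '' {j | j ≠ k}), A ≤ ‖f k - y‖ ^ 2 := by
      intro y hy
      obtain ⟨c, hc_supp, hc_eq⟩ := (Finsupp.mem_span_image_iff_linearCombination ℂ).mp hy
      have hck : c k = 0 := by
        by_contra hne
        exact (Finsupp.mem_supported ℂ c).mp hc_supp (Finsupp.mem_support_iff.mpr hne) rfl
      set d : ℕ →₀ ℂ := Finsupp.single k 1 - c with hd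
      have hdk : d k = 1 := by simp [hd, hck]
      have hlin : Finsupp.linearCombination ℂ f d = f k - y := by
        rw [hd, map_sub, Finsupp.linearCombination_single, one_smul, hc_eq]
      have h1 : (1 : ℝ) ≤ ∑ j ∈ d.support, ‖d j‖ ^ 2 := by
        have hk_mem : k ∈ d.support := Finsupp.mem_support_iff.mpr (by rw [hdk]; norm_num)
        calc (1 : ℝ) = ‖d k‖ ^ 2 := by rw [hdk]; norm_num
        _ ≤ ∑ j ∈ d.support, ‖d j‖ ^ 2 :=
          Finset.single_le_sum (f := fun j => ‖d j‖ ^ 2) (fun j _ => by positivity) hk_mem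
      calc A = A * 1 := by ring
      _ ≤ A * ∑ j ∈ d.support, ‖d j‖ ^ 2 := by
        exact mul_le_mul_of_nonneg_left h1 hA.le
      _ ≤ ‖Finsupp.linearCombination ℂ f d‖ ^ 2 := hR' d
      _ = ‖f k - y‖ ^ 2 := by rw [hlin]
    intro y hy
    have hclosed : IsClosed {y : H | A ≤ ‖f k - y‖ ^ 2} := by
      apply isClosed_le continuous_const
      fun_prop
    have : (Mk k : Set H) ⊆ {y : H | A ≤ ‖f k - y‖ ^ 2} := by
      rw [hMk]
      rw [Submodule.topologicalClosure_coe]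
      exact closure_minimal hspan hclosed
    exact this hy
  have hnorm : ∀ k, A ≤ ‖h k‖ ^ 2 := fun k =>
    hdist k _ (Submodule.orthogonalProjectionOnto (Mk k) (f k)).2
  have hpos : ∀ k, (0:ℝ) < ‖h k‖ ^ 2 := fun k => lt_of_lt_of_le hA (hnorm k)
  have hne : ∀ k, ‖h k‖ ≠ 0 := fun k => by
    intro h0
    have := hpos k
    rw [h0] at this
    simp at this
  -- h k is orthogonal to Mk k
  have horth : ∀ k, ∀ v ∈ Mk k, (inner ℂ v (h k) : ℂ) = 0 := by
    intro k v hv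
    exact (Submodule.mem_orthogonal _ _).mp (Submodule.sub_starProjection_mem_orthogonal (K := Mk k) (f k)) v hv
  set g : ℕ → H := fun k => ((‖h k‖ : ℂ) ^ 2)⁻¹ • h k with hg
  have hfMk : ∀ j k : ℕ, j ≠ k → f j ∈ Mk k := by
    intro j k hjk
    exact Submodule.le_topologicalClosure _
      (Submodule.subset_span ⟨j, hjk, rfl⟩)
  have hbi : ∀ j k : ℕ, (inner ℂ (f j) (g k) : ℂ) = if j = k then 1 else 0 := by
    intro j k
    rw [hg, inner_smul_right]
    by_cases hjk : j = k
    · subst hjk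
      have hfh : (inner ℂ (f j) (h j) : ℂ) = (‖h j‖ : ℂ) ^ 2 := by
        have heq : f j = h j + (Submodule.orthogonalProjectionOnto (Mk j) (f j) : H) := by
          show f j = (f j - (Submodule.orthogonalProjectionOnto (Mk j) (f j) : H)) + _
          abel
        nth_rewrite 1 [heq]
        rw [inner_add_left, inner_self_eq_norm_sq_to_K,
          horth j _ (Submodule.orthogonalProjectionOnto (Mk j) (f j)).2, add_zero]
        norm_cast
      have hc2 : ((‖h j‖ : ℂ)) ^ 2 ≠ 0 :=
        pow_ne_zero 2 (by exact_mod_cast hne j)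
      rw [hfh, if_pos rfl, inv_mul_cancel₀ hc2]
    · rw [horth k (f j) (hfMk j k hjk), mul_zero, if_neg hjk]
  -- g k ∈ M
  have hMkM : ∀ k, Mk k ≤ M := by
    intro k
    exact Submodule.topologicalClosure_mono
      (Submodule.span_mono (Set.image_subset_range f _))
  have hgM : ∀ k, g k ∈ M := by
    intro k
    apply Submodule.smul_mem
    apply Submodule.sub_mem
    · exact Submodule.le_topologicalClosure _ (Submodule.subset_span ⟨k, rfl⟩)
    · exact hMkM k (Submodule.orthogonalProjectionOnto (Mk k) (f k)).2
  -- Bessel-type bound on the closed span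
  have hkey : ∀ (S : Finset ℕ), ∀ y ∈ M, ∑ k ∈ S, ‖(inner ℂ y (g k) : ℂ)‖ ^ 2 ≤ A⁻¹ * ‖y‖ ^ 2 := by
    intro S
    have hspan : ∀ y ∈ Submodule.span ℂ (Set.range f),
        ∑ k ∈ S, ‖(inner ℂ y (g k) : ℂ)‖ ^ 2 ≤ A⁻¹ * ‖y‖ ^ 2 := by
      intro y hy
      obtain ⟨c, hc⟩ := Finsupp.mem_span_range_iff_exists_finsupp.mp hy
      have hyc : y = ∑ j ∈ c.support, c j • f j := by rw [← hc]; rfl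
      have hval : ∀ k, (inner ℂ y (g k) : ℂ) = (starRingEnd ℂ) (c k) := by
        intro k
        rw [hyc, sum_inner]
        have : ∀ j ∈ c.support, (inner ℂ (c j • f j) (g k) : ℂ)
            = if j = k then (starRingEnd ℂ) (c j) else 0 := by
          intro j _
          rw [inner_smul_left, hbi j k, mul_ite, mul_one, mul_zero]
        rw [Finset.sum_congr rfl this, Finset.sum_ite_eq' c.support k
          (fun j => (starRingEnd ℂ) (c j))]
        split_ifs with hk
        · rfl
        · rw [Finsupp.notMem_support_iff.mp hk, map_zero]
      have hsumle : ∑ k ∈ S, ‖c k‖ ^ 2 ≤ ∑ k ∈ c.support, ‖c k‖ ^ 2 := by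
        have h1 : ∑ k ∈ S, ‖c k‖ ^ 2 ≤ ∑ k ∈ S ∪ c.support, ‖c k‖ ^ 2 := by
          apply Finset.sum_le_sum_of_subset_of_nonneg Finset.subset_union_left
          intro i _ _; positivity
        have h2 : ∑ k ∈ c.support, ‖c k‖ ^ 2 = ∑ k ∈ S ∪ c.support, ‖c k‖ ^ 2 := by
          apply Finset.sum_subset Finset.subset_union_right
          intro k _ hk
          rw [Finsupp.notMem_support_iff.mp hk]; norm_num
        rw [h2]; exact h1
      have hlow : A * ∑ k ∈ c.support, ‖c k‖ ^ 2 ≤ ‖y‖ ^ 2 := by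
        rw [hyc]; exact hR c
      have : ∑ k ∈ c.support, ‖c k‖ ^ 2 ≤ A⁻¹ * ‖y‖ ^ 2 := by
        rw [← le_div_iff₀' hA] at hlow
        rwa [div_eq_inv_mul] at hlow
      have heq2 : ∑ k ∈ S, ‖(inner ℂ y (g k) : ℂ)‖ ^ 2 = ∑ k ∈ S, ‖c k‖ ^ 2 :=
        Finset.sum_congr rfl fun k _ => by rw [hval k, RCLike.norm_conj]
      calc ∑ k ∈ S, ‖(inner ℂ y (g k) : ℂ)‖ ^ 2 = ∑ k ∈ S, ‖c k‖ ^ 2 := heq2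
      _ ≤ ∑ k ∈ c.support, ‖c k‖ ^ 2 := hsumle
      _ ≤ A⁻¹ * ‖y‖ ^ 2 := this
    have hclosed : IsClosed {y : H | ∑ k ∈ S, ‖(inner ℂ y (g k) : ℂ)‖ ^ 2 ≤ A⁻¹ * ‖y‖ ^ 2} := by
      apply isClosed_le
      · exact continuous_finset_sum S fun k _ =>
          ((continuous_id.inner continuous_const).norm.pow 2)
      · fun_prop
    intro y hy
    have hsub : (M : Set H) ⊆ {y : H | ∑ k ∈ S, ‖(inner ℂ y (g k) : ℂ)‖ ^ 2 ≤ A⁻¹ * ‖y‖ ^ 2} := by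
      rw [hM, Submodule.topologicalClosure_coe]
      exact closure_minimal hspan hclosed
    exact hsub hy
  refine ⟨g, hbi, ?_⟩
  intro x S
  set y : H := (Submodule.orthogonalProjectionOnto M x : H) with hy
  have hinner_eq : ∀ k, (inner ℂ x (g k) : ℂ) = (inner ℂ y (g k) : ℂ) := by
    intro k
    have hxy : (inner ℂ (x - y) (g k) : ℂ) = 0 := by
      rw [← inner_conj_symm]
      rw [show inner ℂ (g k) (x - y) = 0 from
        (Submodule.mem_orthogonal _ _).mp (Submodule.sub_starProjection_mem_orthogonal (K := M) x)
        (g k) (hgM k)]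
      simp
    have h2 := inner_sub_left (𝕜 := ℂ) x y (g k)
    rw [hxy] at h2
    exact sub_eq_zero.mp h2.symm
  have hyx : ‖y‖ ≤ ‖x‖ := by
    have h1 : ‖Submodule.orthogonalProjectionOnto M x‖ ≤ ‖Submodule.orthogonalProjectionOnto M‖ * ‖x‖ :=
      (Submodule.orthogonalProjectionOnto M).le_opNorm x
    have h2 : ‖Submodule.orthogonalProjectionOnto M‖ * ‖x‖ ≤ 1 * ‖x‖ :=
      mul_le_mul_of_nonneg_right (Submodule.orthogonalProjectionOnto_norm_le M) (norm_nonneg x)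
    calc ‖y‖ = ‖Submodule.orthogonalProjectionOnto M x‖ := rfl
    _ ≤ ‖Submodule.orthogonalProjectionOnto M‖ * ‖x‖ := h1
    _ ≤ 1 * ‖x‖ := h2
    _ = ‖x‖ := one_mul _
  have heq3 : ∑ k ∈ S, ‖(inner ℂ x (g k) : ℂ)‖ ^ 2 = ∑ k ∈ S, ‖(inner ℂ y (g k) : ℂ)‖ ^ 2 :=
    Finset.sum_congr rfl fun k _ => by rw [hinner_eq k]
  calc ∑ k ∈ S, ‖(inner ℂ x (g k) : ℂ)‖ ^ 2 = ∑ k ∈ S, ‖(inner ℂ y (g k) : ℂ)‖ ^ 2 := heq3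
  _ ≤ A⁻¹ * ‖y‖ ^ 2 := hkey S y (Submodule.orthogonalProjectionOnto M x).2
  _ ≤ A⁻¹ * ‖x‖ ^ 2 :=
    mul_le_mul_of_nonneg_left (pow_le_pow_left₀ (norm_nonneg y) hyx 2)
      (inv_nonneg.mpr hA.le)

end RieszHelpers

/-- **Characterization of Riesz sequences in Hilbert spaces.** A sequence `(f_k)` in a
complex Hilbert space is a Riesz sequence with bounds `A, B` if and only if it is a
Bessel system with bound `B` and possesses a biorthogonal system which is a Bessel
system with bound `A⁻¹`. -/
theorem riesz_sequence_characterization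
    {H : Type*} [NormedAddCommGroup H] [InnerProductSpace ℂ H] [CompleteSpace H]
    (f : ℕ → H) (A B : ℝ) (hA : 0 < A) (hAB : A ≤ B) :
    (∀ c : ℕ →₀ ℂ,
      A * ∑ k ∈ c.support, ‖c k‖ ^ 2 ≤ ‖∑ k ∈ c.support, c k • f k‖ ^ 2 ∧
      ‖∑ k ∈ c.support, c k • f k‖ ^ 2 ≤ B * ∑ k ∈ c.support, ‖c k‖ ^ 2) ↔
    ((∀ x : H, ∑' k : ℕ, (‖(inner ℂ x (f k) : ℂ)‖₊ : ℝ≥0∞) ^ 2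
        ≤ ENNReal.ofReal (B * ‖x‖ ^ 2)) ∧
      ∃ g : ℕ → H,
        (∀ j k : ℕ, (inner ℂ (f j) (g k) : ℂ) = if j = k then 1 else 0) ∧
        ∀ x : H, ∑' k : ℕ, (‖(inner ℂ x (g k) : ℂ)‖₊ : ℝ≥0∞) ^ 2
          ≤ ENNReal.ofReal (A⁻¹ * ‖x‖ ^ 2)) := by
  have hB : 0 < B := lt_of_lt_of_le hA hAB
  constructor
  · intro hR
    constructor
    · intro x
      exact tsum_bound_of_finset
        (fun S => bessel_of_riesz_upper f B hB.le (fun c => (hR c).2) x S)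
    · obtain ⟨g, hbi, hbd⟩ := exists_biorthogonal f A hA (fun c => (hR c).1)
      exact ⟨g, hbi, fun x => tsum_bound_of_finset (hbd x)⟩
  · rintro ⟨hBf, g, hbi, hBg⟩ c
    have hBf' : ∀ x : H, ∀ S : Finset ℕ,
        ∑ k ∈ S, ‖(inner ℂ x (f k) : ℂ)‖ ^ 2 ≤ B * ‖x‖ ^ 2 :=
      fun x S => finset_bound_of_tsum (mul_nonneg hB.le (sq_nonneg _)) (hBf x) S
    have hBg' : ∀ x : H, ∀ S : Finset ℕ,
        ∑ k ∈ S, ‖(inner ℂ x (g k) : ℂ)‖ ^ 2 ≤ A⁻¹ * ‖x‖ ^ 2 :=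
      fun x S => finset_bound_of_tsum (mul_nonneg (inv_nonneg.mpr hA.le) (sq_nonneg _))
        (hBg x) S
    exact ⟨riesz_lower_of_bessel f g A hA hbi hBg' c,
      riesz_upper_of_bessel f B hB hBf' c⟩

end
end
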